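/- (Elicitability of ratios of expectations) Let h : O → ℝ^k and q : O → (0,∞) be F-integrable, and define T(F) := (∫h₁ dF / ∫q dF, …, ∫h_k dF / ∫q dF). Let f : A → ℝ be strictly convex and differentiable and set S(x,y) := −f(x)q(y) − ∇f(x)ᵀ(h(y) − q(y)x). Then S is a strictly F-consistent scoring function for T; in particular T is elicitable. -/

import Mathlib

open MeasureTheory

section Aux
open Set Filter MeasureTheory


lemma strict_subgrad {k : ℕ} {A : Set (EuclideanSpace ℝ (Fin k))}
    {f : EuclideanSpace ℝ (Fin k) → ℝ} {g x z : EuclideanSpace ℝ (Fin k)}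
    (hconv : StrictConvexOn ℝ A f) (hx : x ∈ A) (hz : z ∈ A) (hne : z ≠ x)
    (hgrad : HasGradientAt f g x) :
    (inner ℝ g (z - x) : ℝ) < f z - f x := by
  set L : ℝ →ᵃ[ℝ] EuclideanSpace ℝ (Fin k) := AffineMap.lineMap x z with hL
  set φ : ℝ → ℝ := fun t => f (L t) with hφ
  have hL0 : L 0 = x := AffineMap.lineMap_apply_zero x z
  have hL1 : L 1 = z := AffineMap.lineMap_apply_one x z
  -- derivative of φ at 0
  have hline : HasDerivAt (fun t : ℝ => L t) (z - x) 0 := by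
    have : HasDerivAt (fun t : ℝ => t • (z - x) + x) ((1 : ℝ) • (z - x)) 0 :=
      ((hasDerivAt_id (0:ℝ)).smul_const (z - x)).add_const x
    have heq : (fun t : ℝ => L t) = fun t : ℝ => t • (z - x) + x := by
      funext t
      simp [hL, AffineMap.lineMap_apply_module]
      module
    rw [heq]; simpa using this
  have hder : HasDerivAt φ (inner ℝ g (z - x) : ℝ) 0 := by
    have hf : HasFDerivAt f (InnerProductSpace.toDual ℝ _ g) (L 0) := by
      rw [hL0]; exact hgrad.hasFDerivAt
    have := hf.comp_hasDerivAt (x := (0:ℝ)) hline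
    simp only [InnerProductSpace.toDual_apply_apply] at this
    exact this
  -- convexity of φ on [0,1]
  have hφconv : ConvexOn ℝ (Icc (0:ℝ) 1) φ := by
    have := hconv.convexOn.comp_affineMap L
    exact this.subset (fun t ht => hconv.1.lineMap_mem hx hz ht) (convex_Icc 0 1)
  have hmono := hφconv.slope_mono (show (0:ℝ) ∈ Icc (0:ℝ) 1 by norm_num)
  -- d ≤ slope φ 0 (1/2)
  have hd_le : (inner ℝ g (z - x) : ℝ) ≤ slope φ 0 (1/2) := by
    have htend : Tendsto (slope φ 0) (nhdsWithin 0 (Ioi 0)) (nhds (inner ℝ g (z - x) : ℝ)) :=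
      (hasDerivAt_iff_tendsto_slope.mp hder).mono_left
        (nhdsWithin_mono 0 (fun t ht => ne_of_gt ht))
    refine le_of_tendsto htend ?_
    filter_upwards [Ioo_mem_nhdsGT_of_mem (by norm_num : (0:ℝ) ∈ Ico 0 (1/2))] with t ht
    exact hmono ⟨⟨le_of_lt ht.1, by linarith [ht.2]⟩, ne_of_gt ht.1⟩
      ⟨⟨by norm_num, by norm_num⟩, by norm_num⟩ (le_of_lt ht.2)
  -- strict inequality
  have hstrict : slope φ 0 (1/2) < f z - f x := by
    have hmid : φ (1/2) < (1/2 : ℝ) * f x + (1/2 : ℝ) * f z := by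
      have := hconv.2 hx hz hne.symm (by norm_num : (0:ℝ) < 1/2)
        (by norm_num : (0:ℝ) < 1/2) (by norm_num)
      have hL12 : L (1/2) = (1/2 : ℝ) • x + (1/2 : ℝ) • z := by
        simp [hL, AffineMap.lineMap_apply_module]
        module
      rw [hφ]; simp only [hL12]
      simpa [smul_eq_mul] using this
    have hφ0 : φ 0 = f x := by rw [hφ]; simp [hL0]
    rw [slope_def_field, hφ0, div_lt_iff₀ (by norm_num : (0:ℝ) < 1/2 - 0)]
    linarith
  linarith


lemma score_integral {O : Type*} [MeasurableSpace O] {k : ℕ}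
    (F : Measure O) (h : O → EuclideanSpace ℝ (Fin k)) (q : O → ℝ)
    (hh : Integrable h F) (hq : Integrable q F)
    (a x : EuclideanSpace ℝ (Fin k)) (c : ℝ) :
    ∫ y, (-c * q y - (inner ℝ a (h y - q y • x) : ℝ)) ∂F
      = (∫ y, q y ∂F) * ((inner ℝ a x : ℝ) - c) - (inner ℝ a (∫ y, h y ∂F) : ℝ) := by
  have heq : ∀ y, -c * q y - (inner ℝ a (h y - q y • x) : ℝ)
      = q y * ((inner ℝ a x : ℝ) - c) - (inner ℝ a (h y) : ℝ) := by
    intro y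
    rw [inner_sub_right, real_inner_smul_right]
    ring
  simp_rw [heq]
  rw [integral_sub (hq.mul_const _) (hh.const_inner a), integral_mul_const,
    integral_inner hh]
end Aux

/-- Elicitability of ratios of expectations with the same denominator. -/
theorem ratios_of_expectations_elicitable {O : Type*} [MeasurableSpace O] {k : ℕ}
    (𝓕 : Set (Measure O)) (A : Set (EuclideanSpace ℝ (Fin k)))
    (h : O → EuclideanSpace ℝ (Fin k)) (q : O → ℝ) (hqpos : ∀ y, 0 < q y)
    (hhint : ∀ F ∈ 𝓕, Integrable h F)
    (hqint : ∀ F ∈ 𝓕, Integrable q F)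
    (hqbar : ∀ F ∈ 𝓕, 0 < ∫ y, q y ∂F)
    (T : Measure O → EuclideanSpace ℝ (Fin k))
    (hTdef : ∀ F ∈ 𝓕, ∀ i : Fin k, T F i = (∫ y, h y i ∂F) / (∫ y, q y ∂F))
    (hTA : ∀ F ∈ 𝓕, T F ∈ A)
    (f : EuclideanSpace ℝ (Fin k) → ℝ)
    (f' : EuclideanSpace ℝ (Fin k) → EuclideanSpace ℝ (Fin k))
    (hconv : StrictConvexOn ℝ A f)
    (hgrad : ∀ x ∈ A, HasGradientAt f (f' x) x) :
    (∀ x ∈ A, ∀ F ∈ 𝓕,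
        ∫ y, (-f (T F) * q y - (inner ℝ (f' (T F)) (h y - q y • T F) : ℝ)) ∂F
          ≤ ∫ y, (-f x * q y - (inner ℝ (f' x) (h y - q y • x) : ℝ)) ∂F) ∧
    (∀ x ∈ A, ∀ F ∈ 𝓕,
        ∫ y, (-f x * q y - (inner ℝ (f' x) (h y - q y • x) : ℝ)) ∂F
          = ∫ y, (-f (T F) * q y - (inner ℝ (f' (T F)) (h y - q y • T F) : ℝ)) ∂F
        → x = T F) := by
  -- the expected score as a function of the report point
  have key : ∀ F ∈ 𝓕, ∀ x : EuclideanSpace ℝ (Fin k),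
      ∫ y, (-f x * q y - (inner ℝ (f' x) (h y - q y • x) : ℝ)) ∂F
        = (∫ y, q y ∂F) * ((inner ℝ (f' x) (x - T F) : ℝ) - f x) := by
    intro F hF x
    have hQ : (0:ℝ) < ∫ y, q y ∂F := hqbar F hF
    have hH : (∫ y, h y ∂F) = (∫ y, q y ∂F) • T F := by
      ext i
      have hi : (∫ y, h y ∂F) i = ∫ y, h y i ∂F := by
        have := (EuclideanSpace.proj i :
            EuclideanSpace ℝ (Fin k) →L[ℝ] ℝ).integral_comp_comm (hhint F hF)
        simpa using this.symm
      have : ((∫ y, q y ∂F) • T F) i = (∫ y, q y ∂F) * T F i := rfl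
      rw [this, hTdef F hF i, hi, mul_div_cancel₀ _ (ne_of_gt hQ)]
    rw [score_integral F h q (hhint F hF) (hqint F hF) (f' x) x (f x), hH,
      real_inner_smul_right, inner_sub_right]
    ring
  have keyT : ∀ F ∈ 𝓕,
      ∫ y, (-f (T F) * q y - (inner ℝ (f' (T F)) (h y - q y • T F) : ℝ)) ∂F
        = (∫ y, q y ∂F) * (- f (T F)) := by
    intro F hF
    rw [key F hF (T F)]
    simp
  have main : ∀ x ∈ A, ∀ F ∈ 𝓕, x ≠ T F →
      ∫ y, (-f (T F) * q y - (inner ℝ (f' (T F)) (h y - q y • T F) : ℝ)) ∂F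
        < ∫ y, (-f x * q y - (inner ℝ (f' x) (h y - q y • x) : ℝ)) ∂F := by
    intro x hxA F hF hne
    rw [key F hF x, keyT F hF]
    have hQ : (0:ℝ) < ∫ y, q y ∂F := hqbar F hF
    have hsub := strict_subgrad hconv hxA (hTA F hF) (Ne.symm hne) (hgrad x hxA)
    have hinner : (inner ℝ (f' x) (x - T F) : ℝ) = - (inner ℝ (f' x) (T F - x) : ℝ) := by
      rw [← inner_neg_right]; congr 1; abel
    have : - f (T F) < (inner ℝ (f' x) (x - T F) : ℝ) - f x := by
      rw [hinner]; linarith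
    exact mul_lt_mul_of_pos_left this hQ
  constructor
  · intro x hxA F hF
    rcases eq_or_ne x (T F) with rfl | hne
    · exact le_rfl
    · exact le_of_lt (main x hxA F hF hne)
  · intro x hxA F hF heq
    by_contra hne
    exact absurd heq (ne_of_gt (main x hxA F hF hne))
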